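/- Suppose that for every a ∈ A the transitive closure of a belongs to A. Then for every a ∈ A such that a is a transitive set, j₀(a) is a transitive set and j₀(a) ⊆ N₀. (Lemma 3.2 (4), in the general form used in its proof.) -/

import Mathlib

open FirstOrder

/-- The language `L_ε` with a single binary relation symbol (Mathlib's graph language,
whose unique binary relation we interpret as membership). -/
abbrev Lε : FirstOrder.Language := FirstOrder.Language.graph

/-- Any type with a binary relation is an `L_ε`-structure. -/
def memStruc (S : Type*) (r : S → S → Prop) : Lε.Structure S where
  RelMap | .adj => fun x => r (x 0) (x 1)

/-- Satisfaction of an `L_ε`-formula in the structure given by a binary relation `r` on `S`. -/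
def RealizeIn (S : Type*) (r : S → S → Prop) {n : ℕ}
    (φ : Lε.Formula (Fin n)) (v : Fin n → S) : Prop :=
  @FirstOrder.Language.Formula.Realize Lε S (memStruc S r) _ φ v

/-- `t` is the transitive closure of `a`: the `⊆`-least transitive set including `a`. -/
def IsTrCl (a t : ZFSet) : Prop :=
  a ⊆ t ∧ t.IsTransitive ∧ ∀ s : ZFSet, a ⊆ s → s.IsTransitive → t ⊆ s

open FirstOrder.Language in
def trForm : Lε.Formula (Fin 1) :=
  ∀' ∀' ((Language.adj.boundedFormula₂ (&0) (Term.var (Sum.inl 0)) ⊓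
      Language.adj.boundedFormula₂ (&1) (&0)) ⟹
    Language.adj.boundedFormula₂ (&1) (Term.var (Sum.inl 0)))

lemma realize_trForm (S : Type*) (r : S → S → Prop) (a : S) :
    RealizeIn S r trForm (fun _ => a) ↔ ∀ x y : S, r x a → r y x → r y a := by
  simp [RealizeIn, trForm, Language.Formula.Realize, Language.BoundedFormula.realize_all,
    Language.BoundedFormula.realize_imp, Language.BoundedFormula.realize_inf,
    Language.BoundedFormula.realize_rel₂, Language.Term.realize, memStruc, Fin.snoc, and_imp]
  exact Iff.rfl

/-- Lemma 3.2 (4) (general form): if `A` contains the transitive closure of each of its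
elements, then for every transitive `a ∈ A`, `j₀(a)` is transitive and
`j₀(a) ⊆ N₀ := {b ∈ N : ∃ a ∈ A, b ∈ j₀(a)}`. -/

theorem lemma_3_2_4
    (A N : ZFSet) (hA : A.IsTransitive) (hN : N.IsTransitive)
    (j₀ : ZFSet → ZFSet) (hj : ∀ a ∈ A, j₀ a ∈ N)
    (helem : ∀ (n : ℕ) (φ : Lε.Formula (Fin n)) (v : Fin n → {x : ZFSet // x ∈ A}),
      RealizeIn {x : ZFSet // x ∈ A} (fun a b => a.1 ∈ b.1) φ v ↔
        RealizeIn {x : ZFSet // x ∈ N} (fun a b => a.1 ∈ b.1) φ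
          (fun i => ⟨j₀ (v i).1, hj (v i).1 (v i).2⟩))
    (htc : ∀ a ∈ A, ∃ t ∈ A, IsTrCl a t) :
    ∀ a ∈ A, a.IsTransitive →
      (j₀ a).IsTransitive ∧ ∀ c ∈ j₀ a, (c ∈ N ∧ ∃ a' ∈ A, c ∈ j₀ a') := by
  intro a ha hatr
  have hja : j₀ a ∈ N := hj a ha
  refine ⟨?_, fun c hc => ⟨hN _ hja hc, a, ha, hc⟩⟩
  have h := (helem 1 trForm (fun _ => ⟨a, ha⟩)).mp
  rw [realize_trForm] at h
  have h' := h (fun x y hx hy => hatr _ hx hy)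
  rw [realize_trForm] at h'
  intro y hy z hz
  exact h' ⟨y, hN _ hja hy⟩ ⟨z, hN _ (hN _ hja hy) hz⟩ hy hz
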